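/- arXiv:1309.1693 — 2 statements merged into one kernel-verified Lean document; each statement's English description precedes it below -/
import Mathlib

section
/- Let (E_i)_{i∈ℕ} be Banach spaces with a projective system of continuous linear transition maps φ_{ji} : E_j → E_i for i ≤ j (φ_{ii} = id, φ_{ji} ∘ φ_{kj} = φ_{ki} for i ≤ j ≤ k), and let limE ⊆ Π_{i∈ℕ} E_i denote the inverse limit. Suppose for each i we have a vector field X_i : E_i → E_i such that: (a) every X_i is Lipschitz with a common constant μ > 0; (b) there is M > 0 with ‖X_i(z)‖ ≤ M for all i and all z ∈ E_i; and (c) φ_{ji} ∘ X_j = X_i ∘ φ_{ji} for all i ≤ j. Then, with ε := 1/(M+μ), for every y = (y_i) ∈ limE there exist curves x_i : [-ε, ε] → E_i, unique among differentiable curves, such that x_i(0) = y_i and x_i'(t) = X_i(x_i(t)) for all t ∈ [-ε, ε] and all i; moreover (x_i(t))_{i∈ℕ} ∈ limE for every t ∈ [-ε, ε]. -/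
open Set

/-- Flows of projective `μ`-Lipschitz bounded vector fields on PLB spaces:
given a projective system of Banach spaces `(E i, φ)` and vector fields `X i`
that are uniformly `μ`-Lipschitz, uniformly bounded by `M`, and compatible with
the transition maps, through every point `y` of the inverse limit there is a
unique system of integral curves on `[-ε, ε]`, `ε = 1/(M+μ)`, and these curves
stay in the inverse limit. -/
theorem flow_of_projective_lipschitz_bounded_vector_field
    (E : ℕ → Type*) [∀ i, NormedAddCommGroup (E i)] [∀ i, NormedSpace ℝ (E i)]
    [∀ i, CompleteSpace (E i)]
    (φ : ∀ i j : ℕ, i ≤ j → E j →L[ℝ] E i)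
    (hφid : ∀ i (x : E i), φ i i le_rfl x = x)
    (hφcomp : ∀ i j k (hij : i ≤ j) (hjk : j ≤ k) (x : E k),
      φ i j hij (φ j k hjk x) = φ i k (hij.trans hjk) x)
    (X : ∀ i, E i → E i)
    (μ : NNReal) (hμ : 0 < μ)
    (hLip : ∀ i, LipschitzWith μ (X i))
    (M : ℝ) (hM : 0 < M)
    (hbound : ∀ i (z : E i), ‖X i z‖ ≤ M)
    (hcompat : ∀ i j (hij : i ≤ j) (z : E j), φ i j hij (X j z) = X i (φ i j hij z))
    (y : ∀ i, E i) (hy : ∀ i j (hij : i ≤ j), φ i j hij (y j) = y i)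
    (ε : ℝ) (hε : ε = 1 / (M + (μ : ℝ))) :
    ∃ x : ∀ i, ℝ → E i,
      (∀ i, x i 0 = y i) ∧
      (∀ i, ∀ t ∈ Icc (-ε) ε, HasDerivWithinAt (x i) (X i (x i t)) (Icc (-ε) ε) t) ∧
      (∀ t ∈ Icc (-ε) ε, ∀ i j (hij : i ≤ j), φ i j hij (x j t) = x i t) ∧
      (∀ z : ∀ i, ℝ → E i,
        (∀ i, z i 0 = y i) →
        (∀ i, ∀ t ∈ Icc (-ε) ε, HasDerivWithinAt (z i) (X i (z i t)) (Icc (-ε) ε) t) →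
        ∀ i, ∀ t ∈ Icc (-ε) ε, z i t = x i t) := by
  have hε0 : 0 < ε := by
    rw [hε]
    positivity
  -- uniqueness helper
  have uniq : ∀ i (f g : ℝ → E i), f 0 = g 0 →
      (∀ t ∈ Icc (-ε) ε, HasDerivWithinAt f (X i (f t)) (Icc (-ε) ε) t) →
      (∀ t ∈ Icc (-ε) ε, HasDerivWithinAt g (X i (g t)) (Icc (-ε) ε) t) →
      ∀ t ∈ Icc (-ε) ε, f t = g t := by
    intro i f g h0 hf hg
    have h := ODE_solution_unique_of_mem_Icc
      (v := fun _ => X i) (s := fun _ => (univ : Set (E i))) (K := μ)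
      (f := f) (g := g) (a := -ε) (b := ε) (t₀ := 0)
      (fun _ _ => (hLip i).lipschitzOnWith)
      ⟨neg_neg_iff_pos.mpr hε0, hε0⟩
      (fun t ht => (hf t ht).continuousWithinAt)
      (fun t ht => (hf t (Ioo_subset_Icc_self ht)).hasDerivAt
        (Icc_mem_nhds ht.1 ht.2))
      (fun _ _ => trivial)
      (fun t ht => (hg t ht).continuousWithinAt)
      (fun t ht => (hg t (Ioo_subset_Icc_self ht)).hasDerivAt
        (Icc_mem_nhds ht.1 ht.2))
      (fun _ _ => trivial) h0
    exact fun t ht => h ht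
  -- existence for each component
  have hex : ∀ i, ∃ f : ℝ → E i, f 0 = y i ∧
      ∀ t ∈ Icc (-ε) ε, HasDerivWithinAt f (X i (f t)) (Icc (-ε) ε) t := by
    intro i
    have hpl : IsPicardLindelof (fun _ : ℝ => X i) (tmin := -ε) (tmax := ε)
        ⟨0, ⟨neg_nonpos.mpr hε0.le, hε0.le⟩⟩ (y i) (M * ε).toNNReal 0 M.toNNReal μ :=
      { lipschitzOnWith := fun _ _ => (hLip i).lipschitzOnWith
        continuousOn := fun x _ => continuousOn_const
        norm_le := fun _ _ x _ => (hbound i x).trans (Real.le_coe_toNNReal M)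
        mul_max_le := by
          rw [Real.coe_toNNReal _ hM.le, Real.coe_toNNReal _ (mul_pos hM hε0).le]
          simp }
    exact hpl.exists_eq_forall_mem_Icc_hasDerivWithinAt₀
  choose x hx0 hxd using hex
  refine ⟨x, hx0, hxd, ?_, ?_⟩
  · intro t ht i j hij
    refine uniq i (fun t => φ i j hij (x j t)) (x i) ?_ ?_ (hxd i) t ht
    · show φ i j hij (x j 0) = x i 0
      rw [hx0 j, hx0 i, hy]
    · intro t ht
      have := ((φ i j hij).hasFDerivAt.comp_hasDerivWithinAt t (hxd j t ht))
      simpa [hcompat i j hij, Function.comp_def] using this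
  · intro z hz0 hzd i t ht
    exact uniq i (z i) (x i) (by rw [hz0, hx0]) (hzd i) (hxd i) t ht
end

section
/- Let (E_i)_{i∈ℕ} be Banach spaces with a projective system of continuous linear transition maps φ_{ji} : E_j → E_i for i ≤ j, and let limE ⊆ Π_{i∈ℕ} E_i denote the inverse limit. Let μ > 0 and let φ_i : ℝ × E_i → E_i be continuous maps such that each x ↦ φ_i(t, x) is μ-Lipschitz for every t ∈ ℝ, and suppose the family is compatible: φ_{ji}(φ_j(t, x)) = φ_i(t, φ_{ji}(x)) for all i ≤ j, t ∈ ℝ, x ∈ E_j. Let (t₀, x₀) ∈ ℝ × limE and τ > 0 be such that M₁ := sup { ‖φ_i(t, (x₀)_i)‖ : i ∈ ℕ, t ∈ [t₀ − τ, t₀ + τ] } < +∞. Then, with a := min(τ, 1/(M₁ + μ)), there exist curves x_i : [t₀ − a, t₀ + a] → E_i, unique among differentiable curves, such that x_i(t₀) = (x₀)_i and x_i'(t) = φ_i(t, x_i(t)) for all t ∈ [t₀ − a, t₀ + a] and all i; moreover (x_i(t))_{i∈ℕ} ∈ limE for every t ∈ [t₀ − a, t₀ + a]. -/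
open Set

/-- Galanis–Palamides existence–uniqueness theorem for the ODE `x' = φ(t, x)` on a
projective limit of Banach spaces, stated componentwise: for a compatible family
of continuous, uniformly `μ`-Lipschitz (in the space variable) time-dependent
vector fields `f i`, an initial point `x₀` in the inverse limit, and
`M₁ = sup {‖f i t (x₀ i)‖ : i ∈ ℕ, t ∈ [t₀-τ, t₀+τ]} < ∞`, there is a unique
system of solutions on `[t₀-a, t₀+a]` with `a = min(τ, 1/(M₁+μ))`, and the
solutions define a curve in the inverse limit. -/
theorem existence_uniqueness_ode_projective_limit
    (E : ℕ → Type*) [∀ i, NormedAddCommGroup (E i)] [∀ i, NormedSpace ℝ (E i)]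
    [∀ i, CompleteSpace (E i)]
    (φ : ∀ i j : ℕ, i ≤ j → E j →L[ℝ] E i)
    (hφid : ∀ i (x : E i), φ i i le_rfl x = x)
    (hφcomp : ∀ i j k (hij : i ≤ j) (hjk : j ≤ k) (x : E k),
      φ i j hij (φ j k hjk x) = φ i k (hij.trans hjk) x)
    (μ : NNReal) (hμ : 0 < μ)
    (f : ∀ i, ℝ → E i → E i)
    (hcont : ∀ i, Continuous (fun p : ℝ × E i => f i p.1 p.2))
    (hLip : ∀ i (t : ℝ), LipschitzWith μ (f i t))
    (hcompat : ∀ i j (hij : i ≤ j) (t : ℝ) (x : E j),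
      φ i j hij (f j t x) = f i t (φ i j hij x))
    (t₀ : ℝ) (x₀ : ∀ i, E i) (hx₀ : ∀ i j (hij : i ≤ j), φ i j hij (x₀ j) = x₀ i)
    (τ : ℝ) (hτ : 0 < τ)
    (M₁ : ℝ)
    (hM₁ : IsLUB {r : ℝ | ∃ i, ∃ t ∈ Icc (t₀ - τ) (t₀ + τ), r = ‖f i t (x₀ i)‖} M₁)
    (a : ℝ) (ha : a = min τ (1 / (M₁ + (μ : ℝ)))) :
    ∃ x : ∀ i, ℝ → E i,
      (∀ i, x i t₀ = x₀ i) ∧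
      (∀ i, ∀ t ∈ Icc (t₀ - a) (t₀ + a),
        HasDerivWithinAt (x i) (f i t (x i t)) (Icc (t₀ - a) (t₀ + a)) t) ∧
      (∀ t ∈ Icc (t₀ - a) (t₀ + a), ∀ i j (hij : i ≤ j), φ i j hij (x j t) = x i t) ∧
      (∀ z : ∀ i, ℝ → E i,
        (∀ i, z i t₀ = x₀ i) →
        (∀ i, ∀ t ∈ Icc (t₀ - a) (t₀ + a),
          HasDerivWithinAt (z i) (f i t (z i t)) (Icc (t₀ - a) (t₀ + a)) t) →
        ∀ i, ∀ t ∈ Icc (t₀ - a) (t₀ + a), z i t = x i t) := by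
  -- basic facts
  have hM₁0 : 0 ≤ M₁ := by
    have hmem : ‖f 0 t₀ (x₀ 0)‖ ∈
        {r : ℝ | ∃ i, ∃ t ∈ Icc (t₀ - τ) (t₀ + τ), r = ‖f i t (x₀ i)‖} :=
      ⟨0, t₀, ⟨by linarith, by linarith⟩, rfl⟩
    exact le_trans (norm_nonneg _) (hM₁.1 hmem)
  have hMμ : 0 < M₁ + (μ : ℝ) := by positivity
  have ha0 : 0 < a := by
    rw [ha]; exact lt_min hτ (by positivity)
  have haτ : a ≤ τ := ha ▸ min_le_left _ _
  have haMμ : (M₁ + (μ : ℝ)) * a ≤ 1 := by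
    have : a ≤ 1 / (M₁ + (μ : ℝ)) := ha ▸ min_le_right _ _
    calc (M₁ + (μ : ℝ)) * a ≤ (M₁ + (μ : ℝ)) * (1 / (M₁ + (μ : ℝ))) :=
          mul_le_mul_of_nonneg_left this hMμ.le
      _ = 1 := mul_one_div_cancel hMμ.ne'
  set L := t₀ - a with hL
  set R := t₀ + a with hR
  -- Picard-Lindelöf data for each i
  have ht₀mem : t₀ ∈ Icc L R := ⟨by simp [hL]; linarith, by simp [hR]; linarith⟩
  have hpl : ∀ i, IsPicardLindelof (f i) (⟨t₀, ht₀mem⟩ : Icc L R) (x₀ i) 1 0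
      (M₁.toNNReal + μ) μ := by
    intro i
    refine ⟨?_, ?_, ?_, ?_⟩
    · exact fun t _ => (hLip i t).lipschitzOnWith
    · intro x _
      exact ((hcont i).comp (continuous_id.prodMk continuous_const)).continuousOn
    · intro t ht x hx
      have h1 : ‖f i t (x₀ i)‖ ≤ M₁ := hM₁.1
        ⟨i, t, ⟨by simp [hL] at ht; linarith [ht.1], by simp [hR] at ht; linarith [ht.2]⟩, rfl⟩
      have h2 : ‖f i t x - f i t (x₀ i)‖ ≤ (μ : ℝ) * ‖x - x₀ i‖ := by
        simpa [dist_eq_norm] using (hLip i t).dist_le_mul x (x₀ i)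
      have hx1 : ‖x - x₀ i‖ ≤ 1 := by
        simpa [dist_eq_norm] using Metric.mem_closedBall.mp hx
      calc ‖f i t x‖ = ‖f i t (x₀ i) + (f i t x - f i t (x₀ i))‖ := by congr 1; abel
        _ ≤ ‖f i t (x₀ i)‖ + ‖f i t x - f i t (x₀ i)‖ := norm_add_le _ _
        _ ≤ M₁ + (μ : ℝ) * 1 := add_le_add h1 (h2.trans (by
              exact mul_le_mul_of_nonneg_left hx1 μ.2))
        _ = M₁ + (μ : ℝ) := by ring
        _ = ((M₁.toNNReal + μ : NNReal) : ℝ) := by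
              simp only [NNReal.coe_add, Real.coe_toNNReal _ hM₁0]
    · have : max (R - t₀) (t₀ - L) = a := by simp [hL, hR]
      show ((M₁.toNNReal + μ : NNReal) : ℝ) * max (R - t₀) (t₀ - L) ≤ ((1 : NNReal) : ℝ) - ((0 : NNReal) : ℝ)
      rw [this]
      simp only [NNReal.coe_add, Real.coe_toNNReal _ hM₁0, NNReal.coe_zero, sub_zero, NNReal.coe_one]
      exact haMμ
  choose x hx0 hx' using fun i => (hpl i).exists_eq_forall_mem_Icc_hasDerivWithinAt₀
  have hx0 : ∀ i, x i t₀ = x₀ i := hx0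
  -- uniqueness helper, per component
  have uniq : ∀ i (z w : ℝ → E i), z t₀ = w t₀ →
      (∀ t ∈ Icc L R, HasDerivWithinAt z (f i t (z t)) (Icc L R) t) →
      (∀ t ∈ Icc L R, HasDerivWithinAt w (f i t (w t)) (Icc L R) t) →
      ∀ t ∈ Icc L R, z t = w t := by
    intro i z w h0 hz hw t ht
    have hLt₀ : L ≤ t₀ := by simp [hL]; linarith
    have ht₀R : t₀ ≤ R := by simp [hR]; linarith
    have hzc : ContinuousOn z (Icc L R) := fun s hs => (hz s hs).continuousWithinAt
    have hwc : ContinuousOn w (Icc L R) := fun s hs => (hw s hs).continuousWithinAt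
    rcases le_total t t₀ with h | h
    · -- backward
      refine ODE_solution_unique_of_mem_Icc_left (s := fun _ => (univ : Set (E i)))
        (K := μ) (v := f i) (fun s _ => (hLip i s).lipschitzOnWith)
        (hzc.mono (Icc_subset_Icc_right ht₀R)) ?_ (fun _ _ => trivial)
        (hwc.mono (Icc_subset_Icc_right ht₀R)) ?_ (fun _ _ => trivial) h0 ⟨ht.1, h⟩
      · intro s hs
        exact (hz s ⟨hs.1.le, hs.2.trans ht₀R⟩).mono_of_mem_nhdsWithin
          (Icc_mem_nhdsLE_of_mem ⟨hs.1, hs.2.trans ht₀R⟩)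
      · intro s hs
        exact (hw s ⟨hs.1.le, hs.2.trans ht₀R⟩).mono_of_mem_nhdsWithin
          (Icc_mem_nhdsLE_of_mem ⟨hs.1, hs.2.trans ht₀R⟩)
    · -- forward
      refine ODE_solution_unique (K := μ) (v := f i) (hLip i)
        (hzc.mono (Icc_subset_Icc_left hLt₀)) ?_
        (hwc.mono (Icc_subset_Icc_left hLt₀)) ?_ h0 ⟨h, ht.2⟩
      · intro s hs
        exact (hz s ⟨hLt₀.trans hs.1, hs.2.le⟩).mono_of_mem_nhdsWithin
          (Icc_mem_nhdsGE_of_mem ⟨hLt₀.trans hs.1, hs.2⟩)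
      · intro s hs
        exact (hw s ⟨hLt₀.trans hs.1, hs.2.le⟩).mono_of_mem_nhdsWithin
          (Icc_mem_nhdsGE_of_mem ⟨hLt₀.trans hs.1, hs.2⟩)
  refine ⟨x, hx0, hx', ?_, ?_⟩
  · -- compatibility
    intro t ht i j hij
    have hw0 : (fun s => φ i j hij (x j s)) t₀ = x₀ i := by
      show φ i j hij (x j t₀) = x₀ i
      rw [hx0 j]; exact hx₀ i j hij
    have hw' : ∀ s ∈ Icc L R,
        HasDerivWithinAt (fun s => φ i j hij (x j s))
          (f i s (φ i j hij (x j s))) (Icc L R) s := by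
      intro s hs
      have := (φ i j hij).hasFDerivAt.comp_hasDerivWithinAt s (hx' j s hs)
      rw [hcompat i j hij s (x j s)] at this
      exact this
    exact uniq i (fun s => φ i j hij (x j s)) (x i) (by beta_reduce at hw0; rw [hw0, hx0 i]) hw' (hx' i) t ht
  · -- uniqueness
    intro z hz0 hz' i t ht
    exact uniq i (z i) (x i) (by rw [hz0 i, hx0 i]) (hz' i) (hx' i) t ht
end
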